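/- Let ρ be a state on ℂ^d and let A, B be POVMs on ℂ^d with all elements nonzero. Then F(ρ,A) = F(ρ,B) if and only if Ī ∘ F(ρ,A) ∘ Ī = Ī ∘ F(ρ,B) ∘ Ī. -/

import Mathlib

open Matrix
open scoped ComplexOrder

def IsPOVM {d m : ℕ} (A : Fin m → Matrix (Fin d) (Fin d) ℂ) : Prop :=
  (∀ j, (A j).PosSemidef) ∧ ∑ j, A j = 1

/-- The Fisher superoperator `F(ρ,A)(C) = Σ_j (tr(A_j C)/tr(ρ A_j)) A_j`. -/
noncomputable def fisherMap {d m : ℕ} (ρ : Matrix (Fin d) (Fin d) ℂ)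
    (A : Fin m → Matrix (Fin d) (Fin d) ℂ) :
    Matrix (Fin d) (Fin d) ℂ →ₗ[ℂ] Matrix (Fin d) (Fin d) ℂ where
  toFun C := ∑ j, ((A j * C).trace / (ρ * A j).trace) • A j
  map_add' X Y := by
    simp [Matrix.mul_add, add_div, add_smul, Finset.sum_add_distrib]
  map_smul' c X := by
    simp [Matrix.mul_smul, Finset.smul_sum, smul_smul, mul_div_assoc]

/-- `Ī`: the orthogonal projection onto traceless matrices, `C ↦ C − (tr C / d)·I`. -/
noncomputable def tracelessProj (d : ℕ) :
    Matrix (Fin d) (Fin d) ℂ →ₗ[ℂ] Matrix (Fin d) (Fin d) ℂ where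
  toFun C := C - (C.trace / d) • 1
  map_add' X Y := by
    simp only [Matrix.trace_add, add_div, add_smul]
    abel
  map_smul' c X := by
    simp only [Matrix.trace_smul, smul_eq_mul, RingHom.id_apply, smul_sub, smul_smul,
      mul_div_assoc]

lemma aux_trace_zero {k l : ℕ} {B : Matrix (Fin k) (Fin l) ℂ}
    (h : (Bᴴ * B).trace = 0) : B = 0 := by
  have h' : ∑ j, ∑ i, star (B i j) * B i j = 0 := by
    simpa [Matrix.trace, Matrix.mul_apply, Matrix.conjTranspose_apply, Matrix.diag] using h
  have hnn : ∀ j ∈ Finset.univ, (0:ℂ) ≤ ∑ i, star (B i j) * B i j :=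
    fun j _ => Finset.sum_nonneg fun i _ => star_mul_self_nonneg _
  have h2 := (Finset.sum_eq_zero_iff_of_nonneg hnn).mp h'
  ext i j
  have h3 := (Finset.sum_eq_zero_iff_of_nonneg
    (fun i _ => star_mul_self_nonneg (B i j))).mp (h2 j (Finset.mem_univ j)) i (Finset.mem_univ i)
  have : B i j = 0 := by
    rcases mul_eq_zero.mp h3 with h4 | h4
    · simpa using h4
    · exact h4
  simpa using this

lemma aux_trace_eq {d : ℕ} (ρ s Y : Matrix (Fin d) (Fin d) ℂ)
    (hherm : sᴴ = s) (hs : s * s = ρ) :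
    ((Y * s)ᴴ * (Y * s)).trace = (ρ * (Yᴴ * Y)).trace := by
  rw [conjTranspose_mul, hherm]
  calc (s * Yᴴ * (Y * s)).trace
      = ((Y * s) * (s * Yᴴ)).trace := trace_mul_comm _ _
    _ = (Y * (ρ * Yᴴ)).trace := by
        rw [Matrix.mul_assoc, ← Matrix.mul_assoc s s, hs]
    _ = ((ρ * Yᴴ) * Y).trace := trace_mul_comm _ _
    _ = (ρ * (Yᴴ * Y)).trace := by rw [Matrix.mul_assoc]

lemma aux_trace_ne_zero {d : ℕ} {ρ X : Matrix (Fin d) (Fin d) ℂ}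
    (hρ : ρ.PosDef) (hX : X.PosSemidef) (h0 : X ≠ 0) : (ρ * X).trace ≠ 0 := by
  obtain ⟨Y, rfl⟩ : ∃ Y : Matrix (Fin d) (Fin d) ℂ, X = Yᴴ * Y := by
    open scoped MatrixOrder in
    obtain ⟨Y, hY⟩ := CStarAlgebra.nonneg_iff_eq_star_mul_self.mp hX.nonneg
    exact ⟨Y, hY⟩
  obtain ⟨s, hherm, hs⟩ : ∃ s : Matrix (Fin d) (Fin d) ℂ, sᴴ = s ∧ s * s = ρ := by
    open scoped MatrixOrder in
    exact ⟨CFC.sqrt ρ, (CFC.sqrt_nonneg ρ).posSemidef.1, CFC.sqrt_mul_sqrt_self ρ hρ.posSemidef.nonneg⟩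
  intro h
  have hYs : Y * s = 0 := aux_trace_zero (by rw [aux_trace_eq ρ s Y hherm hs, h])
  have hYρ : Y * ρ = 0 := by rw [← hs, ← Matrix.mul_assoc, hYs, Matrix.zero_mul]
  have hY : Y = 0 := by
    rcases hρ.isUnit with ⟨u, hu⟩
    have h5 : Y * (ρ * (↑u⁻¹ : Matrix (Fin d) (Fin d) ℂ)) = 0 := by
      rw [← Matrix.mul_assoc, hYρ, Matrix.zero_mul]
    rwa [← hu, Units.mul_inv, Matrix.mul_one] at h5
  exact h0 (by rw [hY]; simp)

lemma fisherMap_apply {d m : ℕ} (ρ : Matrix (Fin d) (Fin d) ℂ)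
    (A : Fin m → Matrix (Fin d) (Fin d) ℂ) (C : Matrix (Fin d) (Fin d) ℂ) :
    fisherMap ρ A C = ∑ j, ((A j * C).trace / (ρ * A j).trace) • A j := rfl

lemma tracelessProj_apply {d : ℕ} (C : Matrix (Fin d) (Fin d) ℂ) :
    tracelessProj d C = C - (C.trace / d) • 1 := rfl

lemma fisherMap_rho {d m : ℕ} {ρ : Matrix (Fin d) (Fin d) ℂ}
    {A : Fin m → Matrix (Fin d) (Fin d) ℂ} (hA : IsPOVM A)
    (ht : ∀ j, (ρ * A j).trace ≠ 0) : fisherMap ρ A ρ = 1 := by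
  rw [fisherMap_apply, ← hA.2]
  refine Finset.sum_congr rfl fun j _ => ?_
  rw [trace_mul_comm, div_self (ht j), one_smul]

lemma trace_rho_fisherMap {d m : ℕ} {ρ : Matrix (Fin d) (Fin d) ℂ}
    {A : Fin m → Matrix (Fin d) (Fin d) ℂ} (hA : IsPOVM A)
    (ht : ∀ j, (ρ * A j).trace ≠ 0) (C : Matrix (Fin d) (Fin d) ℂ) :
    (ρ * fisherMap ρ A C).trace = C.trace := by
  rw [fisherMap_apply, Matrix.mul_sum, trace_sum]
  simp only [Matrix.mul_smul, trace_smul, smul_eq_mul]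
  have h1 : ∀ j ∈ Finset.univ, (A j * C).trace / (ρ * A j).trace * (ρ * A j).trace
      = (A j * C).trace := fun j _ => div_mul_cancel₀ _ (ht j)
  rw [Finset.sum_congr rfl h1, ← trace_sum]
  have h2 : ∑ j, A j * C = (∑ j, A j) * C := by rw [Finset.sum_mul]
  rw [h2, hA.2, Matrix.one_mul]

/-- `F(ρ,A) = F(ρ,B)` iff `Ī ∘ F(ρ,A) ∘ Ī = Ī ∘ F(ρ,B) ∘ Ī`. -/
theorem stmt_4 {d m n : ℕ}
    (ρ : Matrix (Fin d) (Fin d) ℂ) (hρ : ρ.PosDef) (hρtr : ρ.trace = 1)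
    (A : Fin m → Matrix (Fin d) (Fin d) ℂ) (B : Fin n → Matrix (Fin d) (Fin d) ℂ)
    (hA : IsPOVM A) (hA0 : ∀ j, A j ≠ 0)
    (hB : IsPOVM B) (hB0 : ∀ k, B k ≠ 0) :
    fisherMap ρ A = fisherMap ρ B ↔
      tracelessProj d ∘ₗ fisherMap ρ A ∘ₗ tracelessProj d =
        tracelessProj d ∘ₗ fisherMap ρ B ∘ₗ tracelessProj d := by
  constructor
  · intro h; rw [h]
  · intro h
    have hd : (d : ℂ) ≠ 0 := by
      rcases Nat.eq_zero_or_pos d with hd0 | hd0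
      · subst hd0
        simp [Matrix.trace] at hρtr
      · exact Nat.cast_ne_zero.mpr hd0.ne'
    have htA : ∀ j, (ρ * A j).trace ≠ 0 := fun j => aux_trace_ne_zero hρ (hA.1 j) (hA0 j)
    have htB : ∀ k, (ρ * B k).trace ≠ 0 := fun k => aux_trace_ne_zero hρ (hB.1 k) (hB0 k)
    have hscalar : ∀ X : Matrix (Fin d) (Fin d) ℂ, ∃ s : ℂ,
        fisherMap ρ A (tracelessProj d X) - fisherMap ρ B (tracelessProj d X) = s • 1 := by
      intro X
      have hX := LinearMap.congr_fun h X
      simp only [LinearMap.comp_apply] at hX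
      rw [tracelessProj_apply (fisherMap ρ A (tracelessProj d X)),
        tracelessProj_apply (fisherMap ρ B (tracelessProj d X))] at hX
      refine ⟨(fisherMap ρ A (tracelessProj d X)).trace / ↑d
        - (fisherMap ρ B (tracelessProj d X)).trace / ↑d, ?_⟩
      rw [sub_smul]
      rw [sub_eq_sub_iff_sub_eq_sub] at hX
      exact hX
    apply LinearMap.ext; intro C
    obtain ⟨s1, hs1⟩ := hscalar C
    obtain ⟨s2, hs2⟩ := hscalar ρ
    have hdecomp : ∀ (k : ℕ) (E : Fin k → Matrix (Fin d) (Fin d) ℂ),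
        IsPOVM E → (∀ j, (ρ * E j).trace ≠ 0) →
        fisherMap ρ E C = fisherMap ρ E (tracelessProj d C) + C.trace • 1
          - C.trace • fisherMap ρ E (tracelessProj d ρ) := by
      intro k E hE htE
      have h1 : C = tracelessProj d C + (C.trace / d) • 1 := by
        rw [tracelessProj_apply]; abel
      have hone : (1 : Matrix (Fin d) (Fin d) ℂ) = (d : ℂ) • (ρ - tracelessProj d ρ) := by
        rw [tracelessProj_apply, hρtr]
        rw [sub_sub_cancel, smul_smul, mul_one_div, div_self hd, one_smul]
      calc fisherMap ρ E C
          = fisherMap ρ E (tracelessProj d C + (C.trace / d) • 1) := by rw [← h1]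
        _ = fisherMap ρ E (tracelessProj d C) + (C.trace / d) • fisherMap ρ E 1 := by
            rw [map_add, LinearMap.map_smul]
        _ = fisherMap ρ E (tracelessProj d C)
            + (C.trace / d) • ((d : ℂ) • (fisherMap ρ E ρ - fisherMap ρ E (tracelessProj d ρ))) := by
            rw [show fisherMap ρ E 1
                = (d : ℂ) • (fisherMap ρ E ρ - fisherMap ρ E (tracelessProj d ρ)) by
              conv_lhs => rw [hone]
              rw [LinearMap.map_smul, map_sub]]
        _ = fisherMap ρ E (tracelessProj d C)
            + C.trace • (fisherMap ρ E ρ - fisherMap ρ E (tracelessProj d ρ)) := by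
            rw [smul_smul, div_mul_cancel₀ _ hd]
        _ = _ := by rw [fisherMap_rho hE htE, smul_sub]; abel
    have eA := hdecomp m A hA htA
    have eB := hdecomp n B hB htB
    have key : fisherMap ρ A C - fisherMap ρ B C = (s1 - C.trace * s2) • 1 := by
      have h4 : fisherMap ρ A C - fisherMap ρ B C =
          (fisherMap ρ A (tracelessProj d C) - fisherMap ρ B (tracelessProj d C))
          - C.trace • (fisherMap ρ A (tracelessProj d ρ) - fisherMap ρ B (tracelessProj d ρ)) := by
        rw [eA, eB, smul_sub]; abel
      rw [h4, hs1, hs2, smul_smul, ← sub_smul]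
    have htr : (ρ * (fisherMap ρ A C - fisherMap ρ B C)).trace = 0 := by
      rw [Matrix.mul_sub, trace_sub, trace_rho_fisherMap hA htA, trace_rho_fisherMap hB htB,
        sub_self]
    rw [key] at htr
    have hs : s1 - C.trace * s2 = 0 := by
      simpa [Matrix.mul_smul, Matrix.trace_smul, hρtr] using htr
    have h0 : fisherMap ρ A C - fisherMap ρ B C = 0 := by rw [key, hs, zero_smul]
    exact sub_eq_zero.mp h0
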